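/- Let D be a probability distribution on a finite set V of size v ≥ 1. Then there exist functions A, B : {1,…,v} → V and weights q : {1,…,v} → [0,1] such that for every z ∈ V, D(z) = (1/v)·Σ_{i=1}^v (q(i)·[A(i)=z] + (1−q(i))·[B(i)=z]). That is, D is a uniform mixture of v two-point distributions. -/

import Mathlib

private lemma alias_aux {V : Type*} [Fintype V] [DecidableEq V]
    (v : ℕ) (hv : 1 ≤ v) :
    ∀ (n : ℕ) (s : Finset V) (f : V → ℝ),
      s.card = n → (∀ z, 0 ≤ f z) → (∀ z, z ∉ s → f z = 0) →
      (∑ z ∈ s, f z) = n / v →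
      ∃ (A B : Fin n → V) (q : Fin n → ℝ),
        (∀ i, q i ∈ Set.Icc (0 : ℝ) 1) ∧
        ∀ z, f z = (1 / (v : ℝ)) *
          ∑ i, (q i * (if A i = z then 1 else 0) + (1 - q i) * (if B i = z then 1 else 0)) := by
  have hv0 : (0 : ℝ) < v := by exact_mod_cast hv
  intro n
  induction n with
  | zero =>
    intro s f hcard h0 hsupp hsum
    refine ⟨Fin.elim0, Fin.elim0, Fin.elim0, fun i => i.elim0, fun z => ?_⟩
    have : f z = 0 := hsupp z (by simp [Finset.card_eq_zero.mp hcard])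
    simp [this]
  | succ n ih =>
    intro s f hcard h0 hsupp hsum
    have hne : s.Nonempty := Finset.card_pos.mp (by omega)
    obtain ⟨x, hx, hxmin⟩ := s.exists_min_image f hne
    obtain ⟨y, hy, hymax⟩ := s.exists_max_image f hne
    have hcardsum : (s.card : ℝ) * f x ≤ ∑ z ∈ s, f z := by
      calc (s.card : ℝ) * f x = ∑ _z ∈ s, f x := by rw [Finset.sum_const, nsmul_eq_mul]
        _ ≤ ∑ z ∈ s, f z := Finset.sum_le_sum (fun z hz => hxmin z hz)
    have hsummax : ∑ z ∈ s, f z ≤ (s.card : ℝ) * f y := by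
      calc ∑ z ∈ s, f z ≤ ∑ _z ∈ s, f y := Finset.sum_le_sum (fun z hz => hymax z hz)
        _ = (s.card : ℝ) * f y := by rw [Finset.sum_const, nsmul_eq_mul]
    have hcard' : (s.card : ℝ) = (n + 1 : ℕ) := by exact_mod_cast hcard
    have hn1 : (0 : ℝ) < (n + 1 : ℕ) := by positivity
    have hfx : f x ≤ 1 / v := by
      rw [hcard', hsum] at hcardsum
      have h2 := mul_le_mul_of_nonneg_right hcardsum hv0.le
      rw [div_mul_cancel₀ _ (ne_of_gt hv0)] at h2
      rw [le_div_iff₀ hv0]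
      nlinarith
    have hfy : 1 / v ≤ f y := by
      rw [hcard', hsum] at hsummax
      have h2 := mul_le_mul_of_nonneg_right hsummax hv0.le
      rw [div_mul_cancel₀ _ (ne_of_gt hv0)] at h2
      rw [div_le_iff₀ hv0]
      nlinarith
    set q0 : ℝ := v * f x with hq0
    have hq0mem : q0 ∈ Set.Icc (0 : ℝ) 1 := by
      constructor
      · have := h0 x; positivity
      · rw [hq0]
        calc (v : ℝ) * f x ≤ v * (1 / v) := by nlinarith
          _ = 1 := by field_simp
    set g : V → ℝ := fun z =>
      f z - (q0 * (if x = z then 1 else 0) + (1 - q0) * (if y = z then 1 else 0)) / v with hg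
    have hgx : g x = 0 := by
      by_cases hxy : y = x
      · have hfx1 : f x = 1 / v := le_antisymm hfx (hxy ▸ hfy)
        simp only [hg, hxy, if_pos rfl, mul_one, hfx1]
        field_simp
        rw [if_pos trivial]; ring
      · simp only [hg, if_pos rfl, if_neg hxy, mul_one, mul_zero, add_zero, hq0]
        field_simp
        rw [if_pos trivial]; ring
    have hg0 : ∀ z, 0 ≤ g z := by
      intro z
      by_cases hxz : x = z
      · subst hxz; rw [hgx]
      · by_cases hyz : y = z
        · subst hyz
          have h1 : (1 - q0) / v ≤ f y := by
            rw [div_le_iff₀ hv0, hq0]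
            have h3 : (1 : ℝ) / v * v = 1 := by field_simp
            nlinarith [hfy, h0 x]
          show (0:ℝ) ≤ f y - ((q0 * if x = y then 1 else 0) + (1 - q0) * if y = y then 1 else 0) / ↑v
          rw [if_neg hxz, if_pos rfl]
          rw [mul_zero, zero_add, mul_one]
          linarith
        · simpa [hg, hxz, hyz] using h0 z
    have hgsupp : ∀ z, z ∉ s.erase x → g z = 0 := by
      intro z hz
      by_cases hzx : z = x
      · subst hzx; exact hgx
      · have hzs : z ∉ s := by
          intro hzs; exact hz (Finset.mem_erase.mpr ⟨hzx, hzs⟩)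
        have hxz : x ≠ z := fun h => hzs (h ▸ hx)
        have hyz : y ≠ z := fun h => hzs (h ▸ hy)
        simp [hg, hxz, hyz, hsupp z hzs]
    have hgsum : ∑ z ∈ s.erase x, g z = n / v := by
      rw [Finset.sum_erase s hgx]
      have h1 : ∑ z ∈ s, (if x = z then (1:ℝ) else 0) = 1 := by
        rw [Finset.sum_ite_eq s x (fun _ => (1:ℝ))]; simp [hx]
      have h2 : ∑ z ∈ s, (if y = z then (1:ℝ) else 0) = 1 := by
        rw [Finset.sum_ite_eq s y (fun _ => (1:ℝ))]; simp [hy]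
      simp only [hg]
      rw [Finset.sum_sub_distrib, hsum, ← Finset.sum_div, Finset.sum_add_distrib,
        ← Finset.mul_sum, ← Finset.mul_sum, h1, h2]
      push_cast
      field_simp
      ring
    have hcarde : (s.erase x).card = n := by
      rw [Finset.card_erase_of_mem hx, hcard]
      omega
    obtain ⟨A', B', q', hq', hrep⟩ := ih (s.erase x) g hcarde hg0 hgsupp hgsum
    refine ⟨Fin.cons x A', Fin.cons y B', Fin.cons q0 q', ?_, ?_⟩
    · intro i
      refine Fin.cases ?_ ?_ i
      · exact hq0mem
      · exact fun j => hq' j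
    · intro z
      rw [Fin.sum_univ_succ]
      simp only [Fin.cons_zero, Fin.cons_succ]
      have := hrep z
      have hgz : g z = f z -
          (q0 * (if x = z then 1 else 0) + (1 - q0) * (if y = z then 1 else 0)) / v := rfl
      rw [mul_add, ← this, hgz]
      field_simp
      ring

theorem alias_method_decomposition {V : Type*} [Fintype V] [DecidableEq V]
    (v : ℕ) (hv : 1 ≤ v) (hcard : Fintype.card V = v)
    (D : V → ℝ) (hD0 : ∀ z, 0 ≤ D z) (hD1 : ∑ z, D z = 1) :
    ∃ (A B : Fin v → V) (q : Fin v → ℝ),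
      (∀ i, q i ∈ Set.Icc (0 : ℝ) 1) ∧
      ∀ z : V, D z = (1 / (v : ℝ)) *
        ∑ i, (q i * (if A i = z then 1 else 0) + (1 - q i) * (if B i = z then 1 else 0)) := by
  have hv0 : (0 : ℝ) < v := by exact_mod_cast hv
  exact alias_aux v hv v Finset.univ D (by simpa using hcard)
    hD0 (fun z hz => absurd (Finset.mem_univ z) hz)
    (by rw [hD1]; field_simp)
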